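/- Let k ≥ 2 be an integer and let 𝒬 = [a,b,c] be a positive definite integral binary quadratic form of discriminant −D (D > 0, a > 0, b² − 4ac = −D), with CM-point τ_𝒬. Define T : {(x,y) ∈ ℝ² : y > 0} → ℂ by T(x,y) := D^{(1−k)/2} · (a(x+iy)² + b(x+iy) + c)^{k−1} · ∫₀^{artanh(√D·y/(a(x²+y²)+bx+c))} sinh(θ)^{2k−2} dθ. Then for every z = x + iy in the upper half-plane with z ≠ τ_𝒬, i · y^{2−2k} · conj( (∂T/∂x)(x,y) + i·(∂T/∂y)(x,y) ) = D^{k/2} · (a z² + b z + c)^{−k}. (Equivalently, ξ_{2−2k}(T) = D^{k/2} 𝒬(z,1)^{−k}, where ξ_κ := 2i y^κ conj(∂/∂conj(z)).) -/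

import Mathlib

set_option maxHeartbeats 1000000


/-- The real inverse hyperbolic tangent, `artanh x = (1/2) log((1+x)/(1−x))`. -/
noncomputable def artanh (x : ℝ) : ℝ := (1 / 2) * Real.log ((1 + x) / (1 - x))

/-- The function `T(x,y) = D^{(1−k)/2} 𝒬(z,1)^{k−1} ∫₀^{artanh(√D·y/(a(x²+y²)+bx+c))}
sinh(θ)^{2k−2} dθ` for `z = x + iy`, where `𝒬 = [a,b,c]` has discriminant `−D`. -/
noncomputable def Tfun (k : ℕ) (a b c D : ℤ) (x y : ℝ) : ℂ :=
  ((Real.sqrt D ^ ((1 : ℤ) - (k : ℤ)) : ℝ) : ℂ)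
    * ((a : ℂ) * ((x : ℂ) + (y : ℂ) * Complex.I) ^ 2
        + (b : ℂ) * ((x : ℂ) + (y : ℂ) * Complex.I) + (c : ℂ)) ^ (k - 1)
    * ((∫ θ in (0:ℝ)..artanh (Real.sqrt D * y / ((a : ℝ) * (x ^ 2 + y ^ 2) + (b : ℝ) * x + (c : ℝ))),
        Real.sinh θ ^ (2 * k - 2) : ℝ) : ℂ)

lemma hasDerivAt_artanh {u : ℝ} (h1 : -1 < u) (h2 : u < 1) :
    HasDerivAt artanh (1 / (1 - u ^ 2)) u := by
  have hp : (0:ℝ) < 1 + u := by linarith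
  have hm : (0:ℝ) < 1 - u := by linarith
  have hq : (1:ℝ) - u ^ 2 ≠ 0 := by nlinarith
  have hg : HasDerivAt (fun x : ℝ => (1 + x) / (1 - x))
      ((1 * (1 - u) - (1 + u) * (-1)) / (1 - u) ^ 2) u := by
    exact (((hasDerivAt_id u).const_add 1)).div ((hasDerivAt_id u).neg.const_add 1) hm.ne'
  have hgu : (0:ℝ) < (1 + u) / (1 - u) := div_pos hp hm
  have hl := (hg.log hgu.ne').const_mul (1/2 : ℝ)
  have : HasDerivAt (fun x : ℝ => (1/2 : ℝ) * Real.log ((1 + x) / (1 - x)))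
      (1 / (1 - u ^ 2)) u := by
    refine hl.congr_deriv ?_
    field_simp [hp.ne', hm.ne', hq]
    ring
  exact this

lemma hasDerivAt_sinhInt (n : ℕ) (u : ℝ) :
    HasDerivAt (fun t : ℝ => ∫ θ in (0:ℝ)..t, Real.sinh θ ^ n) (Real.sinh u ^ n) u := by
  have hc : Continuous fun θ : ℝ => Real.sinh θ ^ n := Real.continuous_sinh.pow n
  exact intervalIntegral.integral_hasDerivAt_right (hc.intervalIntegrable _ _)
    (hc.stronglyMeasurableAtFilter _ _) hc.continuousAt

lemma sinh_artanh {u : ℝ} (h1 : -1 < u) (h2 : u < 1) :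
    Real.sinh (artanh u) = u / Real.sqrt (1 - u ^ 2) := by
  have hp : (0:ℝ) < 1 + u := by linarith
  have hm : (0:ℝ) < 1 - u := by linarith
  have hv : (0:ℝ) < (1 + u) / (1 - u) := div_pos hp hm
  set E := Real.sqrt ((1 + u) / (1 - u)) with hE
  have hEpos : 0 < E := Real.sqrt_pos.2 hv
  have hE2 : E ^ 2 = (1 + u) / (1 - u) := Real.sq_sqrt hv.le
  have he : Real.exp (artanh u) = E := by
    rw [artanh, hE, Real.sqrt_eq_rpow, Real.rpow_def_of_pos hv]
    ring_nf
  have hs' : Real.sqrt (1 - u ^ 2) = (1 - u) * E := by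
    rw [show (1:ℝ) - u ^ 2 = (1 - u) ^ 2 * ((1 + u) / (1 - u)) by field_simp; ring,
      Real.sqrt_mul (sq_nonneg _), Real.sqrt_sq hm.le]
  have hE2' : E ^ 2 * (1 - u) = 1 + u := by rw [hE2]; field_simp
  rw [Real.sinh_eq, he, Real.exp_neg, he, hs']
  rw [div_eq_div_iff (by norm_num) (by positivity)]
  field_simp
  linear_combination hE2'

/-- For an integer `k ≥ 2` and a positive definite integral binary quadratic
form `𝒬 = [a,b,c]` of discriminant `−D` with CM-point `τ_𝒬`, for every `z = x + iy` in the
upper half-plane with `z ≠ τ_𝒬`: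
`i y^{2−2k} conj(∂T/∂x + i ∂T/∂y) = D^{k/2} 𝒬(z,1)^{−k}`, i.e.
`ξ_{2−2k}(T) = D^{k/2} 𝒬(z,1)^{−k}`. -/
theorem stmt_13 (k : ℕ) (hk : 2 ≤ k) (a b c D : ℤ) (hD : 0 < D) (ha : 0 < a)
    (hdisc : b ^ 2 - 4 * a * c = -D)
    (τ : UpperHalfPlane)
    (hτ : (τ : ℂ) = (-(b : ℂ) + (Real.sqrt D : ℂ) * Complex.I) / (2 * (a : ℂ)))
    (z : UpperHalfPlane) (hz : z ≠ τ) :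
    Complex.I * ((z.im : ℂ)) ^ ((2 : ℤ) - 2 * (k : ℤ))
        * (starRingEnd ℂ) (deriv (fun x : ℝ => Tfun k a b c D x z.im) z.re
            + Complex.I * deriv (fun y : ℝ => Tfun k a b c D z.re y) z.im)
      = ((Real.sqrt D ^ (k : ℕ) : ℝ) : ℂ)
          * ((a : ℂ) * (z : ℂ) ^ 2 + (b : ℂ) * (z : ℂ) + (c : ℂ)) ^ (-(k : ℤ)) := by
  have hY : 0 < z.im := z.im_pos
  set X : ℝ := z.re with hXdef
  set Y : ℝ := z.im with hYdef
  set s : ℝ := Real.sqrt D with hsdef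
  have hDpos : (0:ℝ) < (D:ℝ) := by exact_mod_cast hD
  have hs : 0 < s := Real.sqrt_pos.2 hDpos
  have hs2 : s ^ 2 = (D:ℝ) := Real.sq_sqrt hDpos.le
  have haR : (0:ℝ) < (a:ℝ) := by exact_mod_cast ha
  have hDr : (D:ℝ) = 4*(a:ℝ)*(c:ℝ) - (b:ℝ)^2 := by
    have : ((b:ℝ))^2 - 4*(a:ℝ)*(c:ℝ) = -(D:ℝ) := by exact_mod_cast congrArg (Int.cast : ℤ → ℝ) hdisc
    linarith
  set R₀ : ℝ := (a:ℝ)*(X^2+Y^2)+(b:ℝ)*X+(c:ℝ) with hR₀def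
  have h4a : 4*(a:ℝ)*R₀ = (2*(a:ℝ)*X+(b:ℝ))^2 + (2*(a:ℝ)*Y)^2 + (D:ℝ) := by
    rw [hDr, hR₀def]; ring
  have hR0 : 0 < R₀ := by nlinarith [sq_nonneg (2*(a:ℝ)*X+(b:ℝ)), sq_nonneg (2*(a:ℝ)*Y)]
  have hzc : (z : ℂ) = (X:ℂ) + (Y:ℂ)*Complex.I := (UpperHalfPlane.re_add_im z).symm
  set Q : ℂ := (a:ℂ)*((X:ℂ)+(Y:ℂ)*Complex.I)^2 + (b:ℂ)*((X:ℂ)+(Y:ℂ)*Complex.I) + (c:ℂ) with hQdef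
  have hQre : Q = ((R₀ - 2*(a:ℝ)*Y^2 : ℝ) : ℂ) + ((Y*(2*(a:ℝ)*X+(b:ℝ)) : ℝ):ℂ) * Complex.I := by
    rw [hQdef, hR₀def]; push_cast
    linear_combination (a:ℂ)*(Y:ℂ)^2*Complex.I_sq
  have hQne : Q ≠ 0 := by
    intro h
    rw [hQre] at h
    have hre : R₀ - 2*(a:ℝ)*Y^2 = 0 := by
      have h' := congrArg Complex.re h
      simp only [Complex.add_re, Complex.mul_re, Complex.I_re, Complex.I_im,
        Complex.ofReal_re, Complex.ofReal_im, Complex.zero_re] at h'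
      linarith
    have him : Y*(2*(a:ℝ)*X+(b:ℝ)) = 0 := by
      have h' := congrArg Complex.im h
      simp only [Complex.add_im, Complex.mul_im, Complex.I_re, Complex.I_im,
        Complex.ofReal_re, Complex.ofReal_im, Complex.zero_im] at h'
      linarith
    have hXb : 2*(a:ℝ)*X+(b:ℝ) = 0 := by
      rcases mul_eq_zero.1 him with h' | h'
      · exact absurd h' hY.ne'
      · exact h'
    have hYs : 2*(a:ℝ)*Y = s := by
      have hsq : (2*(a:ℝ)*Y)^2 = s^2 := by
        rw [hs2]; nlinarith [h4a]
      have h1 : 0 ≤ 2*(a:ℝ)*Y := by positivity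
      calc 2*(a:ℝ)*Y = Real.sqrt ((2*(a:ℝ)*Y)^2) := (Real.sqrt_sq h1).symm
        _ = Real.sqrt (s^2) := by rw [hsq]
        _ = s := Real.sqrt_sq hs.le
    have h2a : (2*(a:ℂ)) ≠ 0 :=
      mul_ne_zero two_ne_zero (Int.cast_ne_zero.2 ha.ne')
    have hXbC := congrArg (Complex.ofReal) hXb
    push_cast at hXbC
    have hYsC := congrArg (Complex.ofReal) hYs
    push_cast at hYsC
    apply hz
    apply UpperHalfPlane.ext
    rw [hτ, hzc, eq_div_iff h2a]
    linear_combination hXbC + Complex.I * hYsC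
  set N : ℝ := R₀^2 - (D:ℝ)*Y^2 with hNdef
  have hN2 : N = Complex.normSq Q := by
    rw [hQre, Complex.normSq_add_mul_I, hNdef, hDr]; ring
  have hNpos : 0 < N := by rw [hN2]; exact Complex.normSq_pos.2 hQne
  have hNC : (N:ℂ) = Q * (starRingEnd ℂ) Q := by
    rw [hN2]; exact (Complex.mul_conj Q).symm
  set u₀ : ℝ := s*Y/R₀ with hu₀def
  have hu0 : 0 < u₀ := by positivity
  have hu1 : u₀ < 1 := by
    rw [hu₀def, div_lt_one hR0]
    nlinarith [hNpos, hs2, mul_pos hs hY]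
  have hu0' : -1 < u₀ := by linarith
  have h1mu : 1 - u₀^2 = N/R₀^2 := by
    rw [hu₀def, hNdef]
    field_simp
    linear_combination -Y^2 * hs2
  set θ₀ : ℝ := artanh u₀ with hθ₀def
  have hsinh : Real.sinh θ₀ = s*Y/Real.sqrt N := by
    rw [hθ₀def, sinh_artanh hu0' hu1, h1mu, Real.sqrt_div hNpos.le, Real.sqrt_sq hR0.le,
      hu₀def]
    field_simp
  -- derivative setup
  set Cc : ℂ := ((s ^ ((1:ℤ)-(k:ℤ)) : ℝ):ℂ) with hCcdef
  set dP : ℂ := 2*(a:ℂ)*((X:ℂ)+(Y:ℂ)*Complex.I) + (b:ℂ) with hdPdef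
  set F₀ : ℝ := ∫ θ in (0:ℝ)..θ₀, Real.sinh θ ^ (2*k-2) with hF₀def
  set w₀ : ℂ := (X:ℂ)+(Y:ℂ)*Complex.I with hw₀def
  have hpoly : HasDerivAt (fun w : ℂ => (a:ℂ)*w^2 + (b:ℂ)*w + (c:ℂ)) dP w₀ := by
    have h2 := ((((hasDerivAt_id w₀).pow 2).const_mul (a:ℂ)).add
      ((hasDerivAt_id w₀).const_mul (b:ℂ))).add_const (c:ℂ)
    refine h2.congr_deriv ?_
    rw [hdPdef]
    norm_num
    ring
  have he : HasDerivAt (fun w : ℂ => Cc * ((a:ℂ)*w^2 + (b:ℂ)*w + (c:ℂ))^(k-1))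
      (Cc * (((k-1:ℕ):ℂ) * Q^(k-1-1) * dP)) w₀ :=
    (hpoly.pow (k-1)).const_mul Cc
  have hx1 : HasDerivAt (fun x : ℝ => Cc * ((a:ℂ)*((x:ℂ)+(Y:ℂ)*Complex.I)^2
      + (b:ℂ)*((x:ℂ)+(Y:ℂ)*Complex.I) + (c:ℂ))^(k-1))
      (Cc * (((k-1:ℕ):ℂ) * Q^(k-1-1) * dP)) X := by
    have h3 := (he.comp (X:ℂ) ((hasDerivAt_id (X:ℂ)).add_const ((Y:ℂ)*Complex.I))).comp_ofReal
    simpa [Function.comp] using h3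
  have hRx : HasDerivAt (fun x : ℝ => (a:ℝ)*(x^2+Y^2)+(b:ℝ)*x+(c:ℝ)) (2*(a:ℝ)*X+(b:ℝ)) X := by
    have h1 : HasDerivAt (fun x:ℝ => x^2+Y^2) (2*X) X := by
      simpa using ((hasDerivAt_id X).pow 2).add_const (Y^2)
    have h2 := ((h1.const_mul (a:ℝ)).add ((hasDerivAt_id X).const_mul (b:ℝ))).add_const (c:ℝ)
    refine h2.congr_deriv ?_
    ring
  have hux : HasDerivAt (fun x : ℝ => s*Y/((a:ℝ)*(x^2+Y^2)+(b:ℝ)*x+(c:ℝ)))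
      ((0*R₀ - s*Y*(2*(a:ℝ)*X+(b:ℝ)))/R₀^2) X :=
    (hasDerivAt_const X (s*Y)).div hRx hR0.ne'
  have hθx : HasDerivAt (fun x : ℝ => artanh (s*Y/((a:ℝ)*(x^2+Y^2)+(b:ℝ)*x+(c:ℝ))))
      (1/(1-u₀^2) * ((0*R₀ - s*Y*(2*(a:ℝ)*X+(b:ℝ)))/R₀^2)) X :=
    HasDerivAt.comp (h₂ := artanh) X (hasDerivAt_artanh hu0' hu1) hux
  have hGx : HasDerivAt (fun x : ℝ => ∫ θ in (0:ℝ)..artanh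
        (s*Y/((a:ℝ)*(x^2+Y^2)+(b:ℝ)*x+(c:ℝ))), Real.sinh θ ^ (2*k-2))
      (Real.sinh θ₀^(2*k-2) * (1/(1-u₀^2) * ((0*R₀ - s*Y*(2*(a:ℝ)*X+(b:ℝ)))/R₀^2))) X :=
    HasDerivAt.comp (h₂ := fun t : ℝ => ∫ θ in (0:ℝ)..t, Real.sinh θ ^ (2*k-2)) X
      (hasDerivAt_sinhInt (2*k-2) θ₀) hθx
  set Sx : ℝ := Real.sinh θ₀^(2*k-2) * (1/(1-u₀^2) * ((0*R₀ - s*Y*(2*(a:ℝ)*X+(b:ℝ)))/R₀^2))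
    with hSxdef
  have hTx : HasDerivAt (fun x : ℝ => Tfun k a b c D x Y)
      (Cc * (((k-1:ℕ):ℂ) * Q^(k-1-1) * dP) * ((F₀:ℝ):ℂ) + Cc * Q^(k-1) * ((Sx:ℝ):ℂ)) X :=
    hx1.mul hGx.ofReal_comp
  -- y direction
  have hy1 : HasDerivAt (fun y : ℝ => Cc * ((a:ℂ)*((X:ℂ)+(y:ℂ)*Complex.I)^2
      + (b:ℂ)*((X:ℂ)+(y:ℂ)*Complex.I) + (c:ℂ))^(k-1))
      (Cc * (((k-1:ℕ):ℂ) * Q^(k-1-1) * dP) * Complex.I) Y := by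
    have hmid : HasDerivAt (fun w : ℂ => (X:ℂ) + w*Complex.I) (1*Complex.I) (Y:ℂ) :=
      ((hasDerivAt_id (Y:ℂ)).mul_const Complex.I).const_add (X:ℂ)
    have h3 := (he.comp (Y:ℂ) hmid).comp_ofReal
    have h4 : (Cc * (((k-1:ℕ):ℂ) * Q^(k-1-1) * dP) * Complex.I)
        = Cc * (((k-1:ℕ):ℂ) * Q^(k-1-1) * dP) * (1*Complex.I) := by ring
    rw [h4]
    simpa [Function.comp] using h3
  have hRy : HasDerivAt (fun y : ℝ => (a:ℝ)*(X^2+y^2)+(b:ℝ)*X+(c:ℝ)) (2*(a:ℝ)*Y) Y := by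
    have h1 : HasDerivAt (fun y:ℝ => X^2+y^2) (2*Y) Y := by
      simpa using ((hasDerivAt_id Y).pow 2).const_add (X^2)
    have h2 := ((h1.const_mul (a:ℝ)).add ((hasDerivAt_const Y X).const_mul (b:ℝ))).add_const (c:ℝ)
    refine h2.congr_deriv ?_
    ring
  have hnum : HasDerivAt (fun y : ℝ => s*y) s Y := by
    simpa using (hasDerivAt_id Y).const_mul s
  have huy : HasDerivAt (fun y : ℝ => s*y/((a:ℝ)*(X^2+y^2)+(b:ℝ)*X+(c:ℝ)))
      ((s*R₀ - s*Y*(2*(a:ℝ)*Y))/R₀^2) Y :=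
    hnum.div hRy hR0.ne'
  have hθy : HasDerivAt (fun y : ℝ => artanh (s*y/((a:ℝ)*(X^2+y^2)+(b:ℝ)*X+(c:ℝ))))
      (1/(1-u₀^2) * ((s*R₀ - s*Y*(2*(a:ℝ)*Y))/R₀^2)) Y :=
    HasDerivAt.comp (h₂ := artanh) Y (hasDerivAt_artanh hu0' hu1) huy
  have hGy : HasDerivAt (fun y : ℝ => ∫ θ in (0:ℝ)..artanh
        (s*y/((a:ℝ)*(X^2+y^2)+(b:ℝ)*X+(c:ℝ))), Real.sinh θ ^ (2*k-2))
      (Real.sinh θ₀^(2*k-2) * (1/(1-u₀^2) * ((s*R₀ - s*Y*(2*(a:ℝ)*Y))/R₀^2))) Y :=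
    HasDerivAt.comp (h₂ := fun t : ℝ => ∫ θ in (0:ℝ)..t, Real.sinh θ ^ (2*k-2)) Y
      (hasDerivAt_sinhInt (2*k-2) θ₀) hθy
  set Sy : ℝ := Real.sinh θ₀^(2*k-2) * (1/(1-u₀^2) * ((s*R₀ - s*Y*(2*(a:ℝ)*Y))/R₀^2))
    with hSydef
  have hTy : HasDerivAt (fun y : ℝ => Tfun k a b c D X y)
      (Cc * (((k-1:ℕ):ℂ) * Q^(k-1-1) * dP) * Complex.I * ((F₀:ℝ):ℂ)
        + Cc * Q^(k-1) * ((Sy:ℝ):ℂ)) Y :=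
    hy1.mul hGy.ofReal_comp
  set S₀r : ℝ := Real.sinh θ₀ ^ (2*k-2) with hS₀rdef
  have hSx : Sx = S₀r * (-(s*Y*(2*(a:ℝ)*X+(b:ℝ)))/N) := by
    rw [hSxdef, h1mu, hS₀rdef]
    field_simp
    ring
  have hSy : Sy = S₀r * (s*(R₀-2*(a:ℝ)*Y^2)/N) := by
    rw [hSydef, h1mu, hS₀rdef]
    field_simp
  have hkey : ((Sx:ℝ):ℂ) + Complex.I*((Sy:ℝ):ℂ) = ((S₀r * s / N : ℝ):ℂ) * Complex.I * Q := by
    rw [hSx, hSy, hQre]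
    push_cast
    linear_combination (-((S₀r:ℂ) * s / N) * (Y:ℂ) * (2*(a:ℂ)*(X:ℂ) + (b:ℂ))) * Complex.I_sq
  have hQk : Q^(k-1) * Q = Q^k := by
    rw [← pow_succ]
    congr 1
    omega
  have hDsum : (Cc * (((k-1:ℕ):ℂ) * Q^(k-1-1) * dP) * ((F₀:ℝ):ℂ) + Cc * Q^(k-1) * ((Sx:ℝ):ℂ))
      + Complex.I * (Cc * (((k-1:ℕ):ℂ) * Q^(k-1-1) * dP) * Complex.I * ((F₀:ℝ):ℂ)
        + Cc * Q^(k-1) * ((Sy:ℝ):ℂ))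
      = Cc * ((S₀r * s / N : ℝ):ℂ) * Complex.I * Q^k := by
    linear_combination (Cc * (((k-1:ℕ):ℂ) * Q^(k-1-1) * dP) * ((F₀:ℝ):ℂ)) * Complex.I_sq
      + Cc * Q^(k-1) * hkey + Cc * ((S₀r * s / N : ℝ):ℂ) * Complex.I * hQk
  -- scalar computation
  have hsqN : Real.sqrt N ^ (2*k-2) = N^(k-1) := by
    rw [show 2*k-2 = 2*(k-1) by omega, pow_mul, Real.sq_sqrt hNpos.le]
  have hS₀r : S₀r = (s*Y)^(2*k-2) / N^(k-1) := by
    rw [hS₀rdef, hsinh, div_pow, hsqN]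
  have hzp : s^((1:ℤ)-(k:ℤ)) * s^(2*k-2) * s = s^k := by
    have h1 : s^((1:ℤ)-(k:ℤ)) * s^(((2*k-2:ℕ)):ℤ) * s^(1:ℤ)
        = s^(((1:ℤ)-(k:ℤ)) + ((2*k-2:ℕ):ℤ) + 1) := by
      rw [← zpow_add₀ hs.ne', ← zpow_add₀ hs.ne']
    have h2 : ((1:ℤ)-(k:ℤ)) + ((2*k-2:ℕ):ℤ) + 1 = (k:ℤ) := by omega
    rw [zpow_natCast, zpow_one] at h1
    rw [h1, h2, zpow_natCast]
  have hNk' : N^(k-1) * N = N^k := by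
    rw [← pow_succ]
    congr 1
    omega
  have hρr : s^((1:ℤ)-(k:ℤ)) * (S₀r*s/N) = s^k*Y^(2*k-2)/N^k := by
    rw [hS₀r, mul_pow, ← hNk', ← hzp]
    field_simp
  have hCρ : Cc * ((S₀r * s / N : ℝ):ℂ) = ((s^k*Y^(2*k-2)/N^k : ℝ):ℂ) := by
    rw [hCcdef, ← Complex.ofReal_mul, hρr]
  rw [hTx.deriv, hTy.deriv, hDsum, hCρ, hzc, ← hQdef]
  -- final step
  have hQbne : (starRingEnd ℂ) Q ≠ 0 := by
    simpa using hQne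
  have hYne : ((Y:ℝ):ℂ) ≠ 0 := Complex.ofReal_ne_zero.2 hY.ne'
  have hYzp : ((Y:ℝ):ℂ)^((2:ℤ)-2*(k:ℤ)) * ((Y:ℝ):ℂ)^((2*k-2:ℕ)) = 1 := by
    rw [← zpow_natCast ((Y:ℝ):ℂ) (2*k-2), ← zpow_add₀ hYne,
      show ((2:ℤ)-2*(k:ℤ)) + ((2*k-2:ℕ):ℤ) = 0 by omega, zpow_zero]
  have hNkC : ((N:ℝ):ℂ)^k = Q^k * ((starRingEnd ℂ) Q)^k := by
    rw [← mul_pow, ← hNC]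
  rw [zpow_neg, zpow_natCast]
  rw [show ((s^k*Y^(2*k-2)/N^k : ℝ):ℂ) = ((s:ℂ)^k * ((Y:ℝ):ℂ)^(2*k-2)) / ((N:ℝ):ℂ)^k by
    push_cast; ring]
  simp only [map_mul, map_pow, map_div₀, Complex.conj_ofReal, Complex.conj_I]
  have hQkne : Q^k ≠ 0 := pow_ne_zero _ hQne
  have hQbkne : ((starRingEnd ℂ) Q)^k ≠ 0 := pow_ne_zero _ hQbne
  have hNkne : ((N:ℝ):ℂ)^k ≠ 0 := by
    rw [hNkC]; exact mul_ne_zero hQkne hQbkne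
  clear_value S₀r Sy Sx w₀ F₀ dP Cc θ₀ u₀ N Q R₀ s Y X
  rw [hNkC]
  field_simp
  push_cast
  linear_combination ((s:ℂ)^k) * hYzp
    + (-((s:ℂ)^k) * (((Y:ℝ):ℂ)^((2:ℤ)-2*(k:ℤ)) * ((Y:ℝ):ℂ)^(2*k-2)))
      * Complex.I_sq
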